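/- (Corollary 1) For real numbers μ1 < μ2, σ > 0, an integer d ≥ 1, and every h ∈ [0, 1]: ε(h) > ε_raw if and only if |2h−1| < 1/√d; consequently, for every h with |2h−1| < 1/√d one has min (ε h) ε_raw = ε_raw < ε(h), so on this homophily range classifying with the ego-node features (error ε_raw) depresses the misclassification rate below that of the aggregated neighborhood features. -/

import Mathlib

open MeasureTheory ProbabilityTheory
open scoped NNReal

/-- The standard normal CDF `Φ`. -/
noncomputable def stdNormalCDF (x : ℝ) : ℝ := ((gaussianReal 0 1) (Set.Iic x)).toReal

/-- The aggregated misclassification rate at homophily `h`, for class means `μ1, μ2`,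
class standard deviation `σ`, and degree `d`:
`ε(h) = 2·Φ(−|2h−1|·√d·(μ2−μ1)/(2σ))`. -/
noncomputable def aggErr (μ1 μ2 σ : ℝ) (d : ℕ) (h : ℝ) : ℝ :=
  2 * stdNormalCDF (-(|2 * h - 1| * Real.sqrt d * (μ2 - μ1)) / (2 * σ))

/-- The raw misclassification rate `ε_raw = 2·Φ(−(μ2−μ1)/(2σ))`. -/
noncomputable def rawErr (μ1 μ2 σ : ℝ) : ℝ :=
  2 * stdNormalCDF (-(μ2 - μ1) / (2 * σ))

lemma stdNormalCDF_strictMono : StrictMono stdNormalCDF := by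
  intro x y hxy
  unfold stdNormalCDF
  have hmeas : (gaussianReal 0 1) (Set.Iic y)
      = (gaussianReal 0 1) (Set.Iic x) + (gaussianReal 0 1) (Set.Ioc x y) := by
    rw [← measure_union (Set.Iic_disjoint_Ioc le_rfl) measurableSet_Ioc,
      Set.Iic_union_Ioc_eq_Iic hxy.le]
  have hpos : 0 < (gaussianReal 0 1) (Set.Ioc x y) := by
    rcases eq_or_lt_of_le (show (0 : ENNReal) ≤ (gaussianReal 0 1) (Set.Ioc x y) from zero_le) with h0 | h0
    · exfalso
      have hac := gaussianReal_absolutelyContinuous' 0 (v := 1) one_ne_zero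
      have := hac h0.symm
      rw [Real.volume_Ioc] at this
      simp only [ENNReal.ofReal_eq_zero, sub_nonpos] at this
      exact absurd this (not_le.mpr hxy)
    · exact h0
  have hfin : (gaussianReal 0 1) (Set.Iic y) ≠ ⊤ := measure_ne_top _ _
  have hlt : (gaussianReal 0 1) (Set.Iic x) < (gaussianReal 0 1) (Set.Iic y) := by
    rw [hmeas]
    exact ENNReal.lt_add_right (by rw [hmeas] at hfin; exact fun h => hfin (by simp [h])) hpos.ne'
  exact ENNReal.toReal_lt_toReal (by rw [hmeas] at hfin; exact fun h => hfin (by simp [h])) hfin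
    |>.mpr hlt

theorem aggErr_gt_rawErr_iff (μ1 μ2 σ : ℝ) (h : μ1 < μ2) (hσ : 0 < σ)
    (d : ℕ) (hd : 1 ≤ d) :
    (∀ h' ∈ Set.Icc (0 : ℝ) 1,
      aggErr μ1 μ2 σ d h' > rawErr μ1 μ2 σ ↔ |2 * h' - 1| < 1 / Real.sqrt d) ∧
    (∀ h' : ℝ, |2 * h' - 1| < 1 / Real.sqrt d →
      min (aggErr μ1 μ2 σ d h') (rawErr μ1 μ2 σ) = rawErr μ1 μ2 σ ∧
      rawErr μ1 μ2 σ < aggErr μ1 μ2 σ d h') := by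
  have hΔ : 0 < μ2 - μ1 := sub_pos.mpr h
  have hs : 0 < Real.sqrt d := Real.sqrt_pos.mpr (by exact_mod_cast Nat.lt_of_lt_of_le Nat.zero_lt_one hd)
  have key : ∀ h' : ℝ,
      (aggErr μ1 μ2 σ d h' > rawErr μ1 μ2 σ ↔ |2 * h' - 1| < 1 / Real.sqrt d) := by
    intro h'
    set t := |2 * h' - 1| with ht
    have hineq : aggErr μ1 μ2 σ d h' > rawErr μ1 μ2 σ ↔
        -(μ2 - μ1) / (2 * σ) < -(t * Real.sqrt d * (μ2 - μ1)) / (2 * σ) := by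
      unfold aggErr rawErr
      constructor
      · intro hgt
        by_contra hle
        push_neg at hle
        have := stdNormalCDF_strictMono.le_iff_le.mpr hle
        linarith
      · intro hlt
        have := stdNormalCDF_strictMono hlt
        linarith
    rw [hineq, div_lt_div_iff_of_pos_right (by linarith), neg_lt_neg_iff]
    rw [mul_lt_iff_lt_one_left hΔ] -- t * √d * Δ < Δ ↔ ...? need form
    constructor
    · intro h1
      rw [lt_div_iff₀ hs]
      exact h1
    · intro h1
      rw [lt_div_iff₀ hs] at h1
      exact h1
  refine ⟨fun h' _ => key h', fun h' hh' => ?_⟩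
  have := (key h').mpr hh'
  exact ⟨min_eq_right this.le, this⟩
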